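/- Over GF(2), for every 2×2 matrix S there exists A ∈ {I, [[1,1],[1,0]], [[0,1],[1,1]]} and invertible 2×2 matrices P, Q with S = P⁻¹·diag(I_r, 0)·Q⁻¹ (r = rank S) such that S + P⁻¹·A·Q⁻¹ is invertible and P⁻¹·A·Q⁻¹ is invertible. -/

import Mathlib

/-- Over `GF(2)`, for every `2 × 2` matrix `S` there exist
`A ∈ {I, [[1,1],[1,0]], [[0,1],[1,1]]}` and invertible `P`, `Q` with
`S = P⁻¹ ⬝ diag(I_r, 0) ⬝ Q⁻¹` (`r = rank S`) such that `P⁻¹⬝A⬝Q⁻¹` and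
`S + P⁻¹⬝A⬝Q⁻¹` are invertible. -/

private abbrev GF2M2 := Matrix (Fin 2) (Fin 2) (ZMod 2)

private lemma gf2_unit_of_det (P : GF2M2) (h : IsUnit P.det) : IsUnit P :=
  (Matrix.isUnit_iff_isUnit_det P).mpr h

private lemma gf2_key {S D P Q A : GF2M2} (hP : IsUnit P) (hQ : IsUnit Q)
    (hA : IsUnit A) (hDA : IsUnit (D + A)) (h : P * S * Q = D) :
    S = P⁻¹ * D * Q⁻¹ ∧ IsUnit (P⁻¹ * A * Q⁻¹) ∧ IsUnit (S + P⁻¹ * A * Q⁻¹) := by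
  have hPd := (Matrix.isUnit_iff_isUnit_det P).mp hP
  have hQd := (Matrix.isUnit_iff_isUnit_det Q).mp hQ
  have hS : S = P⁻¹ * D * Q⁻¹ := by
    rw [← h, Matrix.mul_assoc, Matrix.mul_assoc, Matrix.mul_nonsing_inv _ hQd, Matrix.mul_one,
      ← Matrix.mul_assoc, Matrix.nonsing_inv_mul _ hPd, Matrix.one_mul]
  have hPi : IsUnit (P⁻¹) := gf2_unit_of_det _
    (by rw [Matrix.det_nonsing_inv]; exact isUnit_ringInverse.mpr hPd)
  have hQi : IsUnit (Q⁻¹) := gf2_unit_of_det _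
    (by rw [Matrix.det_nonsing_inv]; exact isUnit_ringInverse.mpr hQd)
  refine ⟨hS, (hPi.mul hA).mul hQi, ?_⟩
  have heq : S + P⁻¹ * A * Q⁻¹ = P⁻¹ * (D + A) * Q⁻¹ := by
    rw [hS]; noncomm_ring
  rw [heq]
  exact (hPi.mul hDA).mul hQi

private def gf2PL : List GF2M2 := [1, !![0,1;1,0], !![1,0;1,1], !![1,1;0,1]]

private lemma gf2_rank_one_witness (S : GF2M2) (h0 : S ≠ 0) (hd : S.det = 0) :
    ∃ P Q : GF2M2, IsUnit P ∧ IsUnit Q ∧ P * S * Q = !![1,0;0,0] := by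
  have main : ∀ a b c d : ZMod 2, (!![a,b;c,d] ≠ 0) → (a*d - b*c = 0) →
      ∃ P ∈ gf2PL, ∃ Q ∈ gf2PL, P * !![a,b;c,d] * Q = !![1,0;0,0] := by decide
  have hdet1 : ∀ P ∈ gf2PL, P.det = 1 := by decide
  have hSe : S = !![S 0 0, S 0 1; S 1 0, S 1 1] := by
    ext i j; fin_cases i <;> fin_cases j <;> rfl
  rw [Matrix.det_fin_two] at hd
  obtain ⟨P, hPm, Q, hQm, hPQ⟩ := main (S 0 0) (S 0 1) (S 1 0) (S 1 1) (hSe ▸ h0) hd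
  exact ⟨P, Q, gf2_unit_of_det _ (by rw [hdet1 P hPm]; exact isUnit_one),
    gf2_unit_of_det _ (by rw [hdet1 Q hQm]; exact isUnit_one), by rw [hSe]; exact hPQ⟩

theorem gf2_completion_choice (S : Matrix (Fin 2) (Fin 2) (ZMod 2)) :
    ∃ A ∈ ({1, !![1, 1; 1, 0], !![0, 1; 1, 1]} :
        Set (Matrix (Fin 2) (Fin 2) (ZMod 2))),
      ∃ P Q : Matrix (Fin 2) (Fin 2) (ZMod 2), IsUnit P ∧ IsUnit Q ∧
        S = P⁻¹ *
            Matrix.diagonal (fun i : Fin 2 => if (i : ℕ) < S.rank then 1 else 0) * Q⁻¹ ∧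
        IsUnit (P⁻¹ * A * Q⁻¹) ∧
        IsUnit (S + P⁻¹ * A * Q⁻¹) := by
  refine ⟨!![1, 1; 1, 0], by simp, ?_⟩
  have hA : IsUnit (!![1, 1; 1, 0] : GF2M2) := gf2_unit_of_det _ (by
    have : (!![1, 1; 1, 0] : GF2M2).det = 1 := by decide
    rw [this]; exact isUnit_one)
  by_cases h0 : S = 0
  · -- rank 0
    subst h0
    have hr : (0 : GF2M2).rank = 0 := Matrix.rank_zero
    have hD : Matrix.diagonal (fun i : Fin 2 =>
        if (i : ℕ) < (0 : GF2M2).rank then (1 : ZMod 2) else 0) = 0 := by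
      rw [hr]; simp
    refine ⟨1, 1, isUnit_one, isUnit_one, ?_⟩
    rw [hD]
    have hDA : IsUnit ((0 : GF2M2) + !![1, 1; 1, 0]) := by rw [zero_add]; exact hA
    exact gf2_key isUnit_one isUnit_one hA hDA (by rw [Matrix.one_mul, Matrix.mul_one])
  · by_cases hdet : IsUnit S.det
    · -- rank 2
      have hS : IsUnit S := gf2_unit_of_det _ hdet
      have hr : S.rank = 2 := by simpa using Matrix.rank_of_isUnit S hS
      have hD : Matrix.diagonal (fun i : Fin 2 =>
          if (i : ℕ) < S.rank then (1 : ZMod 2) else 0) = 1 := by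
        rw [hr]
        have : (fun i : Fin 2 => if (i : ℕ) < 2 then (1 : ZMod 2) else 0) =
            fun _ => 1 := by funext i; simp [i.isLt]
        rw [this, Matrix.diagonal_one]
      have hSi : IsUnit (S⁻¹) := gf2_unit_of_det _
        (by rw [Matrix.det_nonsing_inv]; exact isUnit_ringInverse.mpr hdet)
      refine ⟨S⁻¹, 1, hSi, isUnit_one, ?_⟩
      rw [hD]
      have hDA : IsUnit ((1 : GF2M2) + !![1, 1; 1, 0]) := by
        apply gf2_unit_of_det
        have : ((1 : GF2M2) + !![1, 1; 1, 0]).det = 1 := by decide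
        rw [this]; exact isUnit_one
      exact gf2_key hSi isUnit_one hA hDA
        (by rw [Matrix.mul_one, Matrix.nonsing_inv_mul _ hdet])
    · -- rank 1
      have hd0 : S.det = 0 := by
        rcases (by decide : ∀ x : ZMod 2, x = 0 ∨ x = 1) S.det with h'|h'
        · exact h'
        · exact absurd (h' ▸ isUnit_one) hdet
      obtain ⟨P, Q, hP, hQ, hPSQ⟩ := gf2_rank_one_witness S h0 hd0
      have hPd := (Matrix.isUnit_iff_isUnit_det P).mp hP
      have hQd := (Matrix.isUnit_iff_isUnit_det Q).mp hQ
      have hr : S.rank = 1 := by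
        have h1 : (P * S * Q).rank = S.rank := by
          rw [Matrix.rank_mul_eq_left_of_isUnit_det Q (P * S) hQd,
            Matrix.rank_mul_eq_right_of_isUnit_det P S hPd]
        have h2 : (!![1,0;0,0] : GF2M2) = Matrix.diagonal ![1,0] := by decide
        have h3 : (Matrix.diagonal ![(1:ZMod 2),0]).rank = 1 := by
          rw [Matrix.rank_diagonal, Fintype.card_subtype]; decide
        rw [← h1, hPSQ, h2, h3]
      have hD : Matrix.diagonal (fun i : Fin 2 =>
          if (i : ℕ) < S.rank then (1 : ZMod 2) else 0) = !![1,0;0,0] := by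
        rw [hr]
        ext i j
        fin_cases i <;> fin_cases j <;> simp [Matrix.diagonal]
      refine ⟨P, Q, hP, hQ, ?_⟩
      rw [hD]
      have hDA : IsUnit ((!![1,0;0,0] : GF2M2) + !![1, 1; 1, 0]) := by
        apply gf2_unit_of_det
        have : ((!![1,0;0,0] : GF2M2) + !![1, 1; 1, 0]).det = 1 := by decide
        rw [this]; exact isUnit_one
      exact gf2_key hP hQ hA hDA hPSQ
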